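/- The alpha-mixing coefficient equals one quarter of the (∞,1)-induced norm of Γ: α(X,Y) = 0.25 · ‖Γ‖_{∞,1}. -/

import Mathlib

open Finset

/-- Joint probability of the rectangle `S × T` under the joint distribution `θ`. -/
noncomputable def Pjoint {n m : ℕ} (θ : Fin n → Fin m → ℝ)
    (S : Finset (Fin n)) (T : Finset (Fin m)) : ℝ :=
  ∑ i ∈ S, ∑ j ∈ T, θ i j

/-- Marginal distribution of `X`. -/
noncomputable def margX {n m : ℕ} (θ : Fin n → Fin m → ℝ) (i : Fin n) : ℝ := ∑ j, θ i j

/-- Marginal distribution of `Y`. -/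
noncomputable def margY {n m : ℕ} (θ : Fin n → Fin m → ℝ) (j : Fin m) : ℝ := ∑ i, θ i j

/-- Marginal probability of `S` under the first marginal. -/
noncomputable def PX {n m : ℕ} (θ : Fin n → Fin m → ℝ) (S : Finset (Fin n)) : ℝ :=
  ∑ i ∈ S, margX θ i

/-- Marginal probability of `T` under the second marginal. -/
noncomputable def PY {n m : ℕ} (θ : Fin n → Fin m → ℝ) (T : Finset (Fin m)) : ℝ :=
  ∑ j ∈ T, margY θ j

/-- The alpha-mixing coefficient:
`α(X,Y) = max_{S,T} |P_θ(S×T) − P_μ(S)·P_ν(T)|`. -/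
noncomputable def alpha {n m : ℕ} (θ : Fin n → Fin m → ℝ) : ℝ :=
  sSup {x : ℝ | ∃ (S : Finset (Fin n)) (T : Finset (Fin m)),
    x = |Pjoint θ S T - PX θ S * PY θ T|}


/-- The `(∞,1)`-induced norm of a matrix:
`‖Γ‖_{∞,1} = max_{‖v‖_∞ ≤ 1} ‖Γv‖₁`. -/
noncomputable def normInftyOne {n m : ℕ} (Γ : Matrix (Fin n) (Fin m) ℝ) : ℝ :=
  sSup {x : ℝ | ∃ v : Fin m → ℝ, (∀ j, |v j| ≤ 1) ∧ x = ∑ i, |∑ j, Γ i j * v j|}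

/-- `Γ = θ − μνᵗ` as a function. -/
noncomputable def gam {n m : ℕ} (θ : Fin n → Fin m → ℝ) (i : Fin n) (j : Fin m) : ℝ :=
  θ i j - margX θ i * margY θ j

/-- Sum of `g` over the rectangle `S × T`. -/
noncomputable def Gset {n m : ℕ} (g : Fin n → Fin m → ℝ)
    (S : Finset (Fin n)) (T : Finset (Fin m)) : ℝ :=
  ∑ i ∈ S, ∑ j ∈ T, g i j

section Aux
variable {n m : ℕ}

lemma row_compl (g : Fin n → Fin m → ℝ) (hr : ∀ i, ∑ j, g i j = 0)
    (i : Fin n) (T : Finset (Fin m)) : ∑ j ∈ Tᶜ, g i j = -∑ j ∈ T, g i j := by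
  have h := Finset.sum_add_sum_compl T (g i)
  rw [hr i] at h; linarith

lemma col_compl (g : Fin n → Fin m → ℝ) (hc : ∀ j, ∑ i, g i j = 0)
    (j : Fin m) (S : Finset (Fin n)) : ∑ i ∈ Sᶜ, g i j = -∑ i ∈ S, g i j := by
  have h := Finset.sum_add_sum_compl S (fun i => g i j)
  rw [hc j] at h; linarith

lemma Gset_compl_right (g : Fin n → Fin m → ℝ) (hr : ∀ i, ∑ j, g i j = 0)
    (S : Finset (Fin n)) (T : Finset (Fin m)) : Gset g S Tᶜ = -Gset g S T := by
  unfold Gset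
  rw [← Finset.sum_neg_distrib]
  exact Finset.sum_congr rfl fun i _ => row_compl g hr i T

lemma Gset_compl_left (g : Fin n → Fin m → ℝ) (hc : ∀ j, ∑ i, g i j = 0)
    (S : Finset (Fin n)) (T : Finset (Fin m)) : Gset g Sᶜ T = -Gset g S T := by
  unfold Gset
  calc ∑ i ∈ Sᶜ, ∑ j ∈ T, g i j = ∑ j ∈ T, ∑ i ∈ Sᶜ, g i j := Finset.sum_comm
    _ = ∑ j ∈ T, -∑ i ∈ S, g i j := Finset.sum_congr rfl fun j _ => col_compl g hc j S
    _ = -∑ j ∈ T, ∑ i ∈ S, g i j := Finset.sum_neg_distrib _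
    _ = -∑ i ∈ S, ∑ j ∈ T, g i j := by rw [Finset.sum_comm]

lemma abs_sum_split {k : ℕ} (f : Fin k → ℝ) (S : Finset (Fin k))
    (h1 : ∀ i ∈ S, 0 ≤ f i) (h2 : ∀ i ∈ Sᶜ, f i ≤ 0) :
    ∑ i, |f i| = ∑ i ∈ S, f i - ∑ i ∈ Sᶜ, f i := by
  rw [← Finset.sum_add_sum_compl S fun i => |f i|, sub_eq_add_neg, ← Finset.sum_neg_distrib]
  congr 1
  · exact Finset.sum_congr rfl fun i hi => abs_of_nonneg (h1 i hi)
  · exact Finset.sum_congr rfl fun i hi => abs_of_nonpos (h2 i hi)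

/-- Upper bound: any admissible `v` gives value at most `4 |Gset g S T|` for some `S, T`. -/
lemma ub (g : Fin n → Fin m → ℝ) (hr : ∀ i, ∑ j, g i j = 0) (hc : ∀ j, ∑ i, g i j = 0)
    (v : Fin m → ℝ) (hv : ∀ j, |v j| ≤ 1) :
    ∃ (S : Finset (Fin n)) (T : Finset (Fin m)),
      ∑ i, |∑ j, g i j * v j| ≤ 4 * |Gset g S T| := by
  classical
  set r : Fin n → ℝ := fun i => ∑ j, g i j * v j with hrdef
  set S : Finset (Fin n) := univ.filter fun i => 0 ≤ r i with hS
  set d : Fin m → ℝ := fun j => (∑ i ∈ S, g i j) - ∑ i ∈ Sᶜ, g i j with hd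
  set T : Finset (Fin m) := univ.filter fun j => 0 ≤ d j with hT
  refine ⟨S, T, ?_⟩
  have hA : ∑ i, |r i| = ∑ i ∈ S, r i - ∑ i ∈ Sᶜ, r i := by
    refine abs_sum_split r S (fun i hi => ?_) (fun i hi => ?_)
    · simpa [hS] using hi
    · have : i ∉ S := Finset.mem_compl.mp hi
      simp only [hS, Finset.mem_filter, Finset.mem_univ, true_and] at this
      linarith
  have e1 : ∀ (U : Finset (Fin n)), ∑ i ∈ U, r i = ∑ j, (∑ i ∈ U, g i j) * v j := by
    intro U
    simp only [hrdef]
    rw [Finset.sum_comm]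
    exact Finset.sum_congr rfl fun j _ => (Finset.sum_mul ..).symm
  have hB : ∑ i ∈ S, r i - ∑ i ∈ Sᶜ, r i = ∑ j, d j * v j := by
    rw [e1 S, e1 Sᶜ, ← Finset.sum_sub_distrib]
    exact Finset.sum_congr rfl fun j _ => by simp only [hd]; ring
  have hle : ∑ j, d j * v j ≤ ∑ j, |d j| := by
    refine Finset.sum_le_sum fun j _ => ?_
    calc d j * v j ≤ |d j * v j| := le_abs_self _
      _ = |d j| * |v j| := abs_mul _ _
      _ ≤ |d j| * 1 := by
          exact mul_le_mul_of_nonneg_left (hv j) (abs_nonneg _)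
      _ = |d j| := mul_one _
  have hC : ∑ j, |d j| = ∑ j ∈ T, d j - ∑ j ∈ Tᶜ, d j := by
    refine abs_sum_split d T (fun j hj => ?_) (fun j hj => ?_)
    · simpa [hT] using hj
    · have : j ∉ T := Finset.mem_compl.mp hj
      simp only [hT, Finset.mem_filter, Finset.mem_univ, true_and] at this
      linarith
  have a1 : ∑ j ∈ T, d j = 2 * Gset g S T := by
    have b1 : ∑ j ∈ T, ∑ i ∈ S, g i j = Gset g S T := Finset.sum_comm
    have b2 : ∑ j ∈ T, ∑ i ∈ Sᶜ, g i j = Gset g Sᶜ T := Finset.sum_comm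
    simp only [hd]
    rw [Finset.sum_sub_distrib, b1, b2, Gset_compl_left g hc]
    ring
  have a2 : ∑ j ∈ Tᶜ, d j = -(2 * Gset g S T) := by
    have b1 : ∑ j ∈ Tᶜ, ∑ i ∈ S, g i j = Gset g S Tᶜ := Finset.sum_comm
    have b2 : ∑ j ∈ Tᶜ, ∑ i ∈ Sᶜ, g i j = Gset g Sᶜ Tᶜ := Finset.sum_comm
    simp only [hd]
    rw [Finset.sum_sub_distrib, b1, b2, Gset_compl_left g hc, Gset_compl_right g hr]
    ring
  have : ∑ i, |r i| ≤ 4 * Gset g S T := by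
    rw [hA, hB]
    refine hle.trans ?_
    rw [hC, a1, a2]; linarith
  exact this.trans (by have := le_abs_self (Gset g S T); linarith)

/-- Lower bound: for each `S, T`, the sign vector of `T` achieves at least `4 |Gset g S T|`. -/
lemma lb (g : Fin n → Fin m → ℝ) (hr : ∀ i, ∑ j, g i j = 0) (hc : ∀ j, ∑ i, g i j = 0)
    (S : Finset (Fin n)) (T : Finset (Fin m)) :
    4 * |Gset g S T| ≤ ∑ i, |∑ j, g i j * (if j ∈ T then (1 : ℝ) else -1)| := by
  classical
  set h : Fin n → ℝ := fun i => ∑ j ∈ T, g i j with hh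
  have hrow : ∀ i, ∑ j, g i j * (if j ∈ T then (1 : ℝ) else -1) = 2 * h i := by
    intro i
    rw [← Finset.sum_add_sum_compl T]
    have c1 : ∑ j ∈ T, g i j * (if j ∈ T then (1 : ℝ) else -1) = h i :=
      Finset.sum_congr rfl fun j hj => by simp [hj]
    have c2 : ∑ j ∈ Tᶜ, g i j * (if j ∈ T then (1 : ℝ) else -1) = h i := by
      have : ∑ j ∈ Tᶜ, g i j * (if j ∈ T then (1 : ℝ) else -1) = ∑ j ∈ Tᶜ, -g i j :=
        Finset.sum_congr rfl fun j hj => by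
          have : j ∉ T := Finset.mem_compl.mp hj
          simp [this]
      rw [this, Finset.sum_neg_distrib, row_compl g hr i T, neg_neg]
    rw [c1, c2]; ring
  have h2 : ∑ i, |∑ j, g i j * (if j ∈ T then (1 : ℝ) else -1)| = 2 * ∑ i, |h i| := by
    rw [Finset.mul_sum]
    exact Finset.sum_congr rfl fun i _ => by rw [hrow i, abs_mul]; simp
  rw [h2]
  have h3 : ∑ i, |h i| = ∑ i ∈ S, |h i| + ∑ i ∈ Sᶜ, |h i| :=
    (Finset.sum_add_sum_compl S fun i => |h i|).symm
  have h4 : |Gset g S T| ≤ ∑ i ∈ S, |h i| := Finset.abs_sum_le_sum_abs _ _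
  have h5 : |Gset g S T| ≤ ∑ i ∈ Sᶜ, |h i| := by
    have := Finset.abs_sum_le_sum_abs h Sᶜ
    have e : ∑ i ∈ Sᶜ, h i = Gset g Sᶜ T := rfl
    rw [e, Gset_compl_left g hc, abs_neg] at this
    exact this
  linarith

end Aux

/-- The alpha-mixing coefficient equals one quarter of the `(∞,1)`-induced norm of
`Γ = θ − μνᵗ`. -/
theorem alpha_eq_quarter_normInftyOne {n m : ℕ} (θ : Fin n → Fin m → ℝ)
    (hnn : ∀ i j, 0 ≤ θ i j) (hsum : ∑ i, ∑ j, θ i j = 1) :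
    alpha θ = 0.25 * normInftyOne (Matrix.of fun i j => θ i j - margX θ i * margY θ j) := by
  classical
  set g : Fin n → Fin m → ℝ := gam θ with hg
  have hν : ∑ j, margY θ j = 1 := by
    unfold margY; rw [Finset.sum_comm]; exact hsum
  have hμ : ∑ i, margX θ i = 1 := hsum
  have hr : ∀ i, ∑ j, g i j = 0 := by
    intro i
    simp only [hg, gam]
    rw [Finset.sum_sub_distrib, ← Finset.mul_sum, hν, mul_one]
    simp [margX]
  have hc : ∀ j, ∑ i, g i j = 0 := by
    intro j
    simp only [hg, gam]
    rw [Finset.sum_sub_distrib, ← Finset.sum_mul, hμ, one_mul]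
    simp [margY]
  have hGdiff : ∀ (S : Finset (Fin n)) (T : Finset (Fin m)),
      Pjoint θ S T - PX θ S * PY θ T = Gset g S T := by
    intro S T
    simp only [hg, gam, Gset, Pjoint, PX, PY]
    rw [Finset.sum_mul, ← Finset.sum_sub_distrib]
    refine Finset.sum_congr rfl fun i _ => ?_
    rw [Finset.mul_sum, ← Finset.sum_sub_distrib]
  set A : Set ℝ := {x : ℝ | ∃ (S : Finset (Fin n)) (T : Finset (Fin m)), x = |Gset g S T|}
    with hAdef
  set B : Set ℝ := {x : ℝ | ∃ v : Fin m → ℝ, (∀ j, |v j| ≤ 1) ∧ x = ∑ i, |∑ j, g i j * v j|}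
    with hBdef
  have halpha : alpha θ = sSup A := by
    unfold alpha
    congr 1
    ext x
    constructor
    · rintro ⟨S, T, rfl⟩; exact ⟨S, T, by rw [hGdiff]⟩
    · rintro ⟨S, T, rfl⟩; exact ⟨S, T, by rw [hGdiff]⟩
  have hnorm : normInftyOne (Matrix.of fun i j => θ i j - margX θ i * margY θ j) = sSup B := by
    unfold normInftyOne
    congr 1
  have hAne : A.Nonempty := ⟨_, ∅, ∅, rfl⟩
  have hAbdd : BddAbove A := by
    have hsub : A ⊆ Set.range
        (fun p : Finset (Fin n) × Finset (Fin m) => |Gset g p.1 p.2|) := by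
      rintro x ⟨S, T, rfl⟩; exact ⟨(S, T), rfl⟩
    exact BddAbove.mono hsub (Set.finite_range _).bddAbove
  have hBne : B.Nonempty := ⟨_, fun _ => 0, fun j => by norm_num, rfl⟩
  have hub' : ∀ x ∈ B, x ≤ 4 * sSup A := by
    rintro x ⟨v, hv, rfl⟩
    obtain ⟨S, T, h⟩ := ub g hr hc v hv
    have hle : |Gset g S T| ≤ sSup A := le_csSup hAbdd ⟨S, T, rfl⟩
    linarith
  have hBbdd : BddAbove B := ⟨_, hub'⟩
  have h1 : sSup B ≤ 4 * sSup A := csSup_le hBne hub'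
  have h2 : ∀ a ∈ A, 4 * a ≤ sSup B := by
    rintro a ⟨S, T, rfl⟩
    refine le_trans (lb g hr hc S T) (le_csSup hBbdd ⟨_, ?_, rfl⟩)
    intro j; split <;> norm_num
  have h3 : 4 * sSup A ≤ sSup B := by
    have hA4 : sSup A ≤ sSup B / 4 := csSup_le hAne (fun a ha => by linarith [h2 a ha])
    linarith
  rw [halpha, hnorm]
  norm_num
  linarith
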